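/- arXiv:1810.05659 — 5 statements merged into one kernel-verified Lean document; each statement's English description precedes it below -/
import Mathlib

section
/- Let K be a maximal clique (a clique not properly contained in any other clique) of the offer conflict graph G_O of a MOAP instance, and suppose K contains two offers a, b with dem a ≠ dem b. Then there is a vehicle v ∈ V such that every offer o ∈ K satisfies veh o = some v; in particular K ⊆ O^v. -/
/-- The offer conflict graph `G_O` of a MOAP instance: distinct offers are adjacent iff
they belong to the same demand, or they require the same vehicle and their half-open
absence intervals intersect. -/
def offerGraph {D V O : Type*} (dem : O → D) (veh : O → Option V) (a b : O → ℝ) :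
    SimpleGraph O where
  Adj o o' := o ≠ o' ∧ (dem o = dem o' ∨
    ∃ v : V, veh o = some v ∧ veh o' = some v ∧
      (Set.Ico (a o) (b o) ∩ Set.Ico (a o') (b o')).Nonempty)
  symm := ⟨by
    rintro o o' ⟨hne, h⟩
    refine ⟨hne.symm, ?_⟩
    rcases h with h | ⟨v, h1, h2, h3⟩
    · exact Or.inl h.symm
    · exact Or.inr ⟨v, h2, h1, by rwa [Set.inter_comm] at h3⟩⟩
  loopless := ⟨fun o h => h.1 rfl⟩

/-- A maximal clique: a clique not properly contained in any other clique. -/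
def IsMaxClique {α : Type*} (G : SimpleGraph α) (K : Set α) : Prop :=
  G.IsClique K ∧ ∀ K' : Set α, G.IsClique K' → K ⊆ K' → K' = K

/-- If a maximal clique `K` of the offer conflict graph contains two offers of different
demands, then there is a vehicle `v` such that every offer in `K` requires `v`;
in particular `K ⊆ O^v`. -/
theorem maxClique_of_two_demands_subset_vehicle {D V O : Type*}
    [Fintype D] [Fintype V] [Fintype O]
    (dem : O → D) (veh : O → Option V) (a b : O → ℝ)
    (hab : ∀ o, a o < b o) (hdem : ∀ d : D, ∃ o, dem o = d)
    (K : Set O) (hK : IsMaxClique (offerGraph dem veh a b) K)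
    (oa ob : O) (hoa : oa ∈ K) (hob : ob ∈ K) (hdiff : dem oa ≠ dem ob) :
    ∃ v : V, ∀ o ∈ K, veh o = some v := by
  have hne : oa ≠ ob := fun h => hdiff (by rw [h])
  have hadj := hK.1 hoa hob hne
  rcases hadj.2 with h | ⟨v, hva, hvb, -⟩
  · exact absurd h hdiff
  refine ⟨v, fun o ho => ?_⟩
  by_cases hoa' : o = oa
  · rw [hoa']; exact hva
  by_cases hob' : o = ob
  · rw [hob']; exact hvb
  have h1 := hK.1 ho hoa hoa'
  have h2 := hK.1 ho hob hob'
  rcases h1.2 with hd1 | ⟨w, hw1, hw2, -⟩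
  · rcases h2.2 with hd2 | ⟨w, hw1, hw2, -⟩
    · exact absurd (hd1 ▸ hd2) hdiff
    · rw [hw1]; rw [hvb] at hw2; exact hw2 ▸ rfl
  · rw [hw1]; rw [hva] at hw2; exact hw2 ▸ rfl
end

section
/- Let (I_i)_{i ∈ N} be a finite family of half-open intervals I_i = [a_i, b_i) ⊆ ℝ with a_i < b_i, and let G be the corresponding interval graph. The map sending each nonempty maximal clique K of G (a clique not properly contained in any other clique) to the real number max_{i ∈ K} a_i is injective on the set of maximal cliques. -/
/-- The interval graph of a family of half-open intervals `[a i, b i)`: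
distinct indices are adjacent iff their intervals intersect. -/
def intervalGraph {N : Type*} (a b : N → ℝ) : SimpleGraph N where
  Adj i j := i ≠ j ∧ (Set.Ico (a i) (b i) ∩ Set.Ico (a j) (b j)).Nonempty
  symm := by
    constructor
    rintro i j ⟨hne, h⟩
    exact ⟨hne.symm, by rwa [Set.inter_comm] at h⟩
  loopless := ⟨fun i h => h.1 rfl⟩

/-- A maximal clique (as a finite set of vertices): a clique not properly contained in any
other clique. -/
def IsMaxCliqueF {α : Type*} (G : SimpleGraph α) (K : Finset α) : Prop :=
  G.IsClique ↑K ∧ ∀ K' : Finset α, G.IsClique ↑K' → K ⊆ K' → K' = K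

lemma maxClique_eq_filter {N : Type*} [Fintype N] [DecidableEq N]
    (a b : N → ℝ) (hab : ∀ i, a i < b i)
    (K : Finset N) (h : K.Nonempty)
    (hm : IsMaxCliqueF (intervalGraph a b) K) :
    K = Finset.univ.filter (fun i => a i ≤ K.sup' h a ∧ K.sup' h a < b i) := by
  classical
  set x := K.sup' h a with hx
  obtain ⟨j, hjK, hj⟩ := Finset.exists_mem_eq_sup' h a
  -- every i ∈ K contains x
  have hmem : ∀ i ∈ K, a i ≤ x ∧ x < b i := by
    intro i hi
    refine ⟨Finset.le_sup' a hi, ?_⟩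
    rcases eq_or_ne i j with rfl | hne
    · rw [hj] at hx; rw [hx]; exact hab i
    · obtain ⟨_, t, ⟨⟨hti1, hti2⟩, ⟨htj1, _⟩⟩⟩ := hm.1 hi hjK hne
      calc x = a j := hj
        _ ≤ t := htj1
        _ < b i := hti2
  have hclique : (intervalGraph a b).IsClique
      ↑(Finset.univ.filter (fun i => a i ≤ x ∧ x < b i)) := by
    intro i hi j' hj' hne
    simp only [Finset.coe_filter, Set.mem_setOf_eq] at hi hj'
    exact ⟨hne, x, ⟨hi.2.1, hi.2.2⟩, ⟨hj'.2.1, hj'.2.2⟩⟩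
  have hsub : K ⊆ Finset.univ.filter (fun i => a i ≤ x ∧ x < b i) := by
    intro i hi
    simp only [Finset.mem_filter, Finset.mem_univ, true_and]
    exact hmem i hi
  exact (hm.2 _ hclique hsub).symm

/-- The map sending each nonempty maximal clique `K` of the interval graph of a finite
family of half-open intervals `[a i, b i)` (with `a i < b i`) to `max_{i ∈ K} a i` is
injective on maximal cliques. -/
theorem maxClique_injective_on_maxLeft {N : Type*} [Fintype N] [DecidableEq N]
    (a b : N → ℝ) (hab : ∀ i, a i < b i)
    (K₁ K₂ : Finset N) (h₁ : K₁.Nonempty) (h₂ : K₂.Nonempty)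
    (hm₁ : IsMaxCliqueF (intervalGraph a b) K₁)
    (hm₂ : IsMaxCliqueF (intervalGraph a b) K₂)
    (heq : K₁.sup' h₁ a = K₂.sup' h₂ a) :
    K₁ = K₂ := by
  rw [maxClique_eq_filter a b hab K₁ h₁ hm₁, maxClique_eq_filter a b hab K₂ h₂ hm₂, heq]
end

section
/- Consider an ISMA instance with machines i = 1,…,m having availability intervals [α_i, β_i] and jobs j = 1,…,n with processing intervals [s_j, f_j] (all reals, with α_i ≤ β_i and s_j < f_j). Construct a MOAP instance whose demands are the jobs and whose vehicles are the machines, where for each job j and each machine i with [s_j, f_j] ⊆ [α_i, β_i] there is an offer with cost 0, vehicle i, and absence interval [s_j, f_j], and additionally for each job j there is an offer with cost 1 requiring no vehicle and absence interval [s_j, f_j]. Then the ISMA instance admits a feasible schedule — an assignment σ of jobs to machines with [s_j, f_j] ⊆ [α_{σ(j)}, β_{σ(j)}] for every job j, and [s_j, f_j] ∩ [s_k, f_k] = ∅ for all distinct jobs j, k with σ(j) = σ(k) — if and only if the constructed MOAP instance admits a feasible selection (exactly one offer per demand such that any two distinct selected offers requiring the same vehicle have disjoint absence intervals) of total cost strictly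 less than 1. -/
/-- Offers of the MOAP instance constructed from an ISMA instance which require a vehicle:
pairs of a job `j` and a machine `i` such that `[s j, f j] ⊆ [α i, β i]`. -/
abbrev ISMAVehOffer {m n : ℕ} (α β : Fin m → ℝ) (s f : Fin n → ℝ) : Type :=
  {p : Fin n × Fin m // Set.Icc (s p.1) (f p.1) ⊆ Set.Icc (α p.2) (β p.2)}

/-- Offers of the MOAP instance constructed from an ISMA instance: for each job `j` and
each machine `i` within whose availability interval the job fits, an offer (left summand),
and additionally for each job one offer requiring no vehicle (right summand). -/
abbrev ISMAOffer {m n : ℕ} (α β : Fin m → ℝ) (s f : Fin n → ℝ) : Type :=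
  ISMAVehOffer α β s f ⊕ Fin n

/-- The demand (job) of an offer of the constructed MOAP instance. -/
def ismaDem {m n : ℕ} (α β : Fin m → ℝ) (s f : Fin n → ℝ) :
    ISMAOffer α β s f → Fin n :=
  Sum.elim (fun p => p.1.1) id

/-- The vehicle (machine) required by an offer of the constructed MOAP instance
(`none` for the no-vehicle offers). -/
def ismaVeh {m n : ℕ} (α β : Fin m → ℝ) (s f : Fin n → ℝ) :
    ISMAOffer α β s f → Option (Fin m) :=
  Sum.elim (fun p => some p.1.2) (fun _ => none)

/-- The cost of an offer of the constructed MOAP instance: `0` for offers requiring a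
machine, `1` for the no-vehicle offers. -/
def ismaCost {m n : ℕ} (α β : Fin m → ℝ) (s f : Fin n → ℝ) :
    ISMAOffer α β s f → ℝ :=
  Sum.elim (fun _ => 0) (fun _ => 1)

/-- The absence interval of an offer of the constructed MOAP instance: the processing
interval `[s j, f j]` of its job `j`. -/
def ismaInterval {m n : ℕ} (α β : Fin m → ℝ) (s f : Fin n → ℝ)
    (o : ISMAOffer α β s f) : Set ℝ :=
  Set.Icc (s (ismaDem α β s f o)) (f (ismaDem α β s f o))

/-- An ISMA instance (machines `i` available on `[α i, β i]`, jobs `j` processed on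
`[s j, f j]`) admits a feasible schedule iff the MOAP instance constructed from it admits
a feasible selection (exactly one offer per demand, selected offers requiring the same
vehicle have disjoint absence intervals) of total cost strictly less than `1`. -/
theorem isma_iff_moap {m n : ℕ} (α β : Fin m → ℝ) (s f : Fin n → ℝ)
    (hαβ : ∀ i, α i ≤ β i) (hsf : ∀ j, s j < f j) :
    (∃ σ : Fin n → Fin m,
        (∀ j, Set.Icc (s j) (f j) ⊆ Set.Icc (α (σ j)) (β (σ j))) ∧
        (∀ j k, j ≠ k → σ j = σ k →
          Set.Icc (s j) (f j) ∩ Set.Icc (s k) (f k) = ∅)) ↔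
    (∃ S : Finset (ISMAOffer α β s f),
        (∀ j : Fin n, ∃! o, o ∈ S ∧ ismaDem α β s f o = j) ∧
        (∀ o ∈ S, ∀ o' ∈ S, o ≠ o' → ∀ v : Fin m,
          ismaVeh α β s f o = some v → ismaVeh α β s f o' = some v →
          ismaInterval α β s f o ∩ ismaInterval α β s f o' = ∅) ∧
        (∑ o ∈ S, ismaCost α β s f o) < 1) := by

  constructor
  · rintro ⟨σ, hsub, hdisj⟩
    refine ⟨Finset.univ.image (fun j => Sum.inl ⟨(j, σ j), hsub j⟩), ?_, ?_, ?_⟩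
    · intro j
      refine ⟨Sum.inl ⟨(j, σ j), hsub j⟩,
        ⟨Finset.mem_image_of_mem _ (Finset.mem_univ j), rfl⟩, ?_⟩
      rintro o ⟨ho, hdem⟩
      simp only [Finset.mem_image] at ho
      obtain ⟨k, -, rfl⟩ := ho
      simp only [ismaDem, Sum.elim_inl] at hdem
      subst hdem; rfl
    · intro o ho o' ho' hne v hv hv'
      simp only [Finset.mem_image] at ho ho'
      obtain ⟨j, -, rfl⟩ := ho
      obtain ⟨k, -, rfl⟩ := ho'
      have hjk : j ≠ k := by rintro rfl; exact hne rfl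
      simp only [ismaVeh, Sum.elim_inl, Option.some.injEq] at hv hv'
      simp only [ismaInterval, ismaDem, Sum.elim_inl]
      exact hdisj j k hjk (hv.trans hv'.symm)
    · have h0 : ∀ o ∈ Finset.univ.image
          (fun j => (Sum.inl ⟨(j, σ j), hsub j⟩ : ISMAOffer α β s f)),
          ismaCost α β s f o = 0 := by
        intro o ho
        simp only [Finset.mem_image] at ho
        obtain ⟨j, -, rfl⟩ := ho
        rfl
      rw [Finset.sum_congr rfl h0]
      simp
  · rintro ⟨S, huniq, hdisj, hcost⟩
    have hnoinr : ∀ j : Fin n, Sum.inr j ∉ S := by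
      intro j hj
      have h1 : (1:ℝ) ≤ ∑ o ∈ S, ismaCost α β s f o := by
        have := Finset.single_le_sum
          (f := ismaCost α β s f) (fun o _ => by cases o <;> simp [ismaCost]) hj
        simpa [ismaCost] using this
      linarith
    have key : ∀ j, ∃ p : ISMAVehOffer α β s f, Sum.inl p ∈ S ∧ p.1.1 = j := by
      intro j
      obtain ⟨o, ⟨hoS, hod⟩, -⟩ := huniq j
      cases o with
      | inl p => exact ⟨p, hoS, hod⟩
      | inr k => exact absurd hoS (hnoinr k)
    choose p hpS hpj using key
    refine ⟨fun j => (p j).1.2, ?_, ?_⟩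
    · intro j
      have h := (p j).2
      rw [hpj j] at h
      exact h
    · intro j k hjk hσ
      have hne : (Sum.inl (p j) : ISMAOffer α β s f) ≠ Sum.inl (p k) := by
        intro h
        apply hjk
        have := congrArg (ismaDem α β s f) h
        simpa [ismaDem, hpj] using this
      have h := hdisj _ (hpS j) _ (hpS k) hne ((p j).1.2) rfl
        (by simp only [ismaVeh, Sum.elim_inl]; exact congrArg some hσ.symm)
      simpa [ismaInterval, ismaDem, hpj] using h
end

section
/- Let (I_i)_{i ∈ N} be a finite family of half-open intervals I_i = [a_i, b_i) ⊆ ℝ with a_i < b_i, and let m be a positive integer. If every point t ∈ ℝ is contained in at most m of the intervals, then there exists a coloring f : N → Fin m such that f(i) ≠ f(j) whenever i ≠ j and I_i ∩ I_j ≠ ∅. (This yields the assignment of selected abstract mobility offers of a vehicle class to the individual vehicles of that class.) -/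
theorem interval_coloring_aux (m : ℕ) (hm : 0 < m) :
    ∀ (n : ℕ) {N : Type*} [Fintype N] (a b : N → ℝ),
      Fintype.card N ≤ n → (∀ i, a i < b i) →
      (∀ t : ℝ, {i : N | t ∈ Set.Ico (a i) (b i)}.ncard ≤ m) →
      ∃ c : N → Fin m, ∀ i j : N, i ≠ j →
        (Set.Ico (a i) (b i) ∩ Set.Ico (a j) (b j)).Nonempty → c i ≠ c j := by
  intro n
  induction n with
  | zero =>
    intro N _ a b hcard _ _
    have hE : IsEmpty N := Fintype.card_eq_zero_iff.mp (Nat.le_zero.mp hcard)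
    exact ⟨fun i => isEmptyElim i, fun i => isEmptyElim i⟩
  | succ n ih =>
    intro N _ a b hcard hab hcover
    classical
    by_cases hN : Nonempty N
    · -- pick i with maximal a i
      obtain ⟨i, -, hi⟩ := Finset.exists_max_image Finset.univ a Finset.univ_nonempty
      set N' := {j : N // j ≠ i}
      have hcard' : Fintype.card N' ≤ n := by
        have h1 : Fintype.card N' < Fintype.card N :=
          Fintype.card_subtype_lt (p := fun j => j ≠ i) (x := i) (by simp)
        omega
      -- apply induction hypothesis to the family without i
      obtain ⟨c', hc'⟩ := ih (fun j : N' => a j.val) (fun j : N' => b j.val) hcard'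
        (fun j => hab j.val)
        (by
          intro t
          have hsub : (Subtype.val '' {j : N' | t ∈ Set.Ico (a j.val) (b j.val)})
              ⊆ {j : N | t ∈ Set.Ico (a j) (b j)} := by
            rintro x ⟨j, hj, rfl⟩; exact hj
          calc {j : N' | t ∈ Set.Ico (a j.val) (b j.val)}.ncard
              = (Subtype.val '' {j : N' | t ∈ Set.Ico (a j.val) (b j.val)}).ncard :=
                (Set.ncard_image_of_injective _ Subtype.val_injective).symm
            _ ≤ {j : N | t ∈ Set.Ico (a j) (b j)}.ncard :=
                Set.ncard_le_ncard hsub (Set.toFinite _)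
            _ ≤ m := hcover t)
      -- neighbors of i
      set S' : Finset N' := Finset.univ.filter
        (fun j : N' => (Set.Ico (a j.val) (b j.val) ∩ Set.Ico (a i) (b i)).Nonempty) with hS'def
      -- every neighbor of i contains the point a i
      have hmem : ∀ j : N', j ∈ S' → a i ∈ Set.Ico (a j.val) (b j.val) := by
        intro j hj
        rw [hS'def, Finset.mem_filter] at hj
        obtain ⟨t, ⟨htj1, htj2⟩, ⟨hti1, hti2⟩⟩ := hj.2
        exact ⟨hi j.val (Finset.mem_univ _), lt_of_le_of_lt hti1 htj2⟩
      -- counting: S'.card < m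
      have hScard : S'.card < m := by
        set Tf : Finset N := Finset.univ.filter (fun j => a i ∈ Set.Ico (a j) (b j)) with hTf
        have hTcard : Tf.card ≤ m := by
          have := hcover (a i)
          have heq : {j : N | a i ∈ Set.Ico (a j) (b j)} = (Tf : Set N) := by
            ext j; simp [hTf]
          rwa [heq, Set.ncard_coe_finset] at this
        have hins : insert i (S'.image Subtype.val) ⊆ Tf := by
          intro x hx
          rcases Finset.mem_insert.mp hx with rfl | hx
          · simp [hTf, Set.mem_Ico, le_refl, hab x]
          · obtain ⟨j, hj, rfl⟩ := Finset.mem_image.mp hx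
            simp only [hTf, Finset.mem_filter, Finset.mem_univ, true_and]
            exact hmem j hj
        have hnotmem : i ∉ S'.image Subtype.val := by
          simp only [Finset.mem_image, not_exists]
          rintro j ⟨hj, hji⟩
          exact j.prop hji
        have h1 : (S'.image Subtype.val).card + 1 ≤ m := by
          have := Finset.card_le_card hins
          rw [Finset.card_insert_of_notMem hnotmem] at this
          omega
        have h2 : (S'.image Subtype.val).card = S'.card :=
          Finset.card_image_of_injective _ Subtype.val_injective
        omega
      -- pick a fresh color
      have hcompl : ((S'.image c')ᶜ : Finset (Fin m)).Nonempty := by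
        rw [← Finset.card_pos, Finset.card_compl, Fintype.card_fin]
        have := Finset.card_image_le (s := S') (f := c')
        omega
      obtain ⟨k, hk⟩ := hcompl
      rw [Finset.mem_compl] at hk
      -- define the coloring
      refine ⟨fun j => if h : j = i then k else c' ⟨j, h⟩, ?_⟩
      intro p q hpq hint
      by_cases hp : p = i <;> by_cases hq : q = i
      · exact absurd (hp.trans hq.symm) hpq
      · subst hp
        simp only [dif_pos, dif_neg hq]
        intro hcontra
        apply hk
        apply Finset.mem_image.mpr
        refine ⟨⟨q, hq⟩, ?_, hcontra.symm⟩
        rw [hS'def, Finset.mem_filter]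
        exact ⟨Finset.mem_univ _, by rwa [Set.inter_comm] at hint⟩
      · subst hq
        simp only [dif_pos, dif_neg hp]
        intro hcontra
        apply hk
        apply Finset.mem_image.mpr
        refine ⟨⟨p, hp⟩, ?_, hcontra⟩
        rw [hS'def, Finset.mem_filter]
        exact ⟨Finset.mem_univ _, hint⟩
      · simp only [dif_neg hp, dif_neg hq]
        exact hc' ⟨p, hp⟩ ⟨q, hq⟩ (fun h => hpq (congrArg Subtype.val h)) hint
    · have hE : IsEmpty N := not_nonempty_iff.mp hN
      exact ⟨fun i => isEmptyElim i, fun i => isEmptyElim i⟩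

/-- Interval graph coloring: given a finite family of half-open intervals `[a i, b i)`
with `a i < b i` and a positive integer `m` such that every point `t ∈ ℝ` is contained
in at most `m` of the intervals, there is a coloring of the intervals with `m` colors
such that distinct intersecting intervals receive different colors.  (The colors play
the role of the individual vehicles of a vehicle class with `m` interchangeable
vehicles.) -/
theorem exists_interval_coloring {N : Type*} [Fintype N]
    (a b : N → ℝ) (hab : ∀ i, a i < b i) (m : ℕ) (hm : 0 < m)
    (hcover : ∀ t : ℝ, {i : N | t ∈ Set.Ico (a i) (b i)}.ncard ≤ m) :
    ∃ c : N → Fin m, ∀ i j : N, i ≠ j →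
      (Set.Ico (a i) (b i) ∩ Set.Ico (a j) (b j)).Nonempty → c i ≠ c j :=
  interval_coloring_aux m hm (Fintype.card N) a b le_rfl hab hcover
end

section
/- Consider a MOAPVC instance and let S be a set of abstract mobility offers containing exactly one offer of each demand. Then there exists a vehicle assignment s mapping each o ∈ S with cls o = some w to a vehicle s(o) ∈ φ⁻¹(w) such that any two distinct o, p ∈ S with s(o) = s(p) satisfy T_o ∩ T_p = ∅, if and only if for every vehicle class w ∈ W and every maximal clique K of the class conflict graph G^w, |S ∩ K| ≤ |φ⁻¹(w)|. -/
/-- The class conflict graph `G^w` of a MOAPVC instance, a simple graph on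
`Ō^w = {o | cls o = some w}`: distinct abstract offers of vehicle class `w` are adjacent
iff their absence intervals intersect. -/
def clsGraph {W A : Type*} (cls : A → Option W) (a b : A → ℝ) (w : W) :
    SimpleGraph {o : A // cls o = some w} where
  Adj o o' := o ≠ o' ∧ (Set.Ico (a o.1) (b o.1) ∩ Set.Ico (a o'.1) (b o'.1)).Nonempty
  symm := ⟨by
    rintro o o' ⟨hne, h⟩
    exact ⟨hne.symm, by rwa [Set.inter_comm] at h⟩⟩
  loopless := ⟨fun o h => h.1 rfl⟩

open Classical in
theorem interval_color {A V : Type*} [DecidableEq A] [DecidableEq V]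
    (a b : A → ℝ) (hab : ∀ i, a i < b i) (C : Finset V) :
    ∀ s : Finset A, s.Nonempty →
      (∀ t : ℝ, (s.filter (fun i => t ∈ Set.Ico (a i) (b i))).card ≤ C.card) →
      ∃ f : A → V, (∀ i ∈ s, f i ∈ C) ∧
        ∀ i ∈ s, ∀ j ∈ s, i ≠ j → f i = f j →
          Set.Ico (a i) (b i) ∩ Set.Ico (a j) (b j) = ∅ := by
  intro s
  induction s using Finset.strongInduction with
  | _ s ih =>
    intro hsne hload
    obtain ⟨i₀, hi₀s, hmax⟩ := s.exists_max_image a hsne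
    set s' := s.erase i₀ with hs'
    have hss' : s' ⊂ s := Finset.erase_ssubset hi₀s
    have hload' : ∀ t : ℝ, (s'.filter (fun i => t ∈ Set.Ico (a i) (b i))).card ≤ C.card := by
      intro t
      exact le_trans (Finset.card_le_card (Finset.filter_subset_filter _ (Finset.erase_subset _ _))) (hload t)
    -- neighbors of i₀ among s'
    set N := s'.filter (fun j => (Set.Ico (a i₀) (b i₀) ∩ Set.Ico (a j) (b j)).Nonempty) with hN
    have hNsub : insert i₀ N ⊆ s.filter (fun i => a i₀ ∈ Set.Ico (a i) (b i)) := by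
      intro j hj
      rcases Finset.mem_insert.mp hj with rfl | hj
      · exact Finset.mem_filter.mpr ⟨hi₀s, ⟨le_refl _, hab j⟩⟩
      · rw [hN, Finset.mem_filter] at hj
        obtain ⟨hj1, t, ht1, ht2⟩ := hj
        refine Finset.mem_filter.mpr ⟨Finset.mem_of_mem_erase hj1, ?_, ?_⟩
        · exact hmax j (Finset.mem_of_mem_erase hj1)
        · exact lt_of_le_of_lt ht1.1 ht2.2
    have hNcard : N.card < C.card := by
      have h1 : (insert i₀ N).card ≤ C.card := le_trans (Finset.card_le_card hNsub) (hload (a i₀))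
      have h2 : i₀ ∉ N := fun h => (Finset.notMem_erase i₀ s) (Finset.mem_of_mem_filter _ h)
      rw [Finset.card_insert_of_notMem h2] at h1
      omega
    have hCne : C.Nonempty := Finset.card_pos.mp (by omega)
    rcases s'.eq_empty_or_nonempty with hse | hs'ne
    · -- s = {i₀}
      refine ⟨fun _ => hCne.choose, fun i _ => hCne.choose_spec, ?_⟩
      intro i hi j hj hij _
      have h1 : i = i₀ := by
        by_contra h
        have := Finset.mem_erase.mpr ⟨h, hi⟩
        rw [← hs', hse] at this
        simp at this
      have h2 : j = i₀ := by
        by_contra h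
        have := Finset.mem_erase.mpr ⟨h, hj⟩
        rw [← hs', hse] at this
        simp at this
      exact absurd (h1.trans h2.symm) hij
    obtain ⟨f, hf1, hf2⟩ := ih s' hss' hs'ne hload'
    have himg : (N.image f).card < C.card := lt_of_le_of_lt Finset.card_image_le hNcard
    have hc : ∃ c ∈ C, c ∉ N.image f := by
      by_contra h
      push_neg at h
      exact absurd (Finset.card_le_card h) (not_le.mpr himg)
    obtain ⟨c, hcC, hcN⟩ := hc
    refine ⟨Function.update f i₀ c, ?_, ?_⟩
    · intro i hi
      rcases eq_or_ne i i₀ with rfl | h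
      · simpa using hcC
      · rw [Function.update_of_ne h]
        exact hf1 i (Finset.mem_erase.mpr ⟨h, hi⟩)
    · intro i hi j hj hij heq
      rcases eq_or_ne i i₀ with rfl | hi0
      · rw [Function.update_self] at heq
        rw [Function.update_of_ne (Ne.symm hij)] at heq
        have hjN : j ∉ N := fun h => hcN (Finset.mem_image.mpr ⟨j, h, heq.symm⟩)
        rw [hN, Finset.mem_filter] at hjN
        push_neg at hjN
        have := hjN (Finset.mem_erase.mpr ⟨Ne.symm hij, hj⟩)
        exact this
      · rcases eq_or_ne j i₀ with rfl | hj0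
        · rw [Function.update_self, Function.update_of_ne hi0] at heq
          have hiN : i ∉ N := fun h => hcN (Finset.mem_image.mpr ⟨i, h, heq⟩)
          rw [hN, Finset.mem_filter] at hiN
          push_neg at hiN
          have := hiN (Finset.mem_erase.mpr ⟨hi0, hi⟩)
          rw [Set.inter_comm] at this
          exact this
        · rw [Function.update_of_ne hi0, Function.update_of_ne hj0] at heq
          exact hf2 i (Finset.mem_erase.mpr ⟨hi0, hi⟩) j (Finset.mem_erase.mpr ⟨hj0, hj⟩) hij heq

/-- For a MOAPVC instance and a set `S` of abstract offers containing exactly one offer of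
each demand, there is an assignment of each selected offer of vehicle class `w` to an
individual vehicle of `φ⁻¹(w)` such that distinct offers assigned to the same vehicle have
disjoint absence intervals, iff for every vehicle class `w` and every maximal clique `K` of
the class conflict graph `G^w` we have `|S ∩ K| ≤ |φ⁻¹(w)|`. -/
theorem moapvc_assignable_iff_maxClique_card_le {D V W A : Type*}
    [Fintype D] [Fintype V] [Fintype W] [Fintype A]
    (φ : V → W) (dem : A → D) (cls : A → Option W) (a b : A → ℝ)
    (hab : ∀ o, a o < b o) (hdem : ∀ d : D, ∃ o, dem o = d)
    (S : Set A) (hS : ∀ d : D, ∃! o, o ∈ S ∧ dem o = d) :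
    (∃ sv : {o : A // o ∈ S ∧ (cls o).isSome} → V,
        (∀ o : {o : A // o ∈ S ∧ (cls o).isSome}, ∀ w : W,
          cls o.1 = some w → φ (sv o) = w) ∧
        (∀ o p : {o : A // o ∈ S ∧ (cls o).isSome}, o ≠ p → sv o = sv p →
          Set.Ico (a o.1) (b o.1) ∩ Set.Ico (a p.1) (b p.1) = ∅)) ↔
    (∀ w : W, ∀ K : Set {o : A // cls o = some w},
        IsMaxClique (clsGraph cls a b w) K →
        (S ∩ Subtype.val '' K).ncard ≤ {v : V | φ v = w}.ncard) := by
  classical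
  constructor
  · rintro ⟨sv, hsv1, hsv2⟩ w K hK
    rcases isEmpty_or_nonempty V with hV | hV
    · have hempty : S ∩ Subtype.val '' K = ∅ := by
        ext o
        simp only [Set.mem_inter_iff, Set.mem_image, Set.mem_empty_iff_false, iff_false,
          not_and]
        rintro hoS ⟨oh, hohK, rfl⟩
        exact (hV.false (sv ⟨oh.1, hoS, by rw [oh.2]; rfl⟩)).elim
      simp [hempty]
    · refine Set.ncard_le_ncard_of_injOn
        (fun o => if h : o ∈ S ∧ (cls o).isSome then sv ⟨o, h⟩ else Classical.arbitrary V)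
        ?_ ?_ (Set.toFinite _)
      · rintro o ⟨hoS, oh, hohK, rfl⟩
        have h : oh.1 ∈ S ∧ (cls oh.1).isSome := ⟨hoS, by rw [oh.2]; rfl⟩
        simp only [Set.mem_setOf_eq, dif_pos h]
        exact hsv1 _ w oh.2
      · rintro o ⟨hoS, oh, hohK, hohv⟩ p ⟨hpS, ph, hphK, hphv⟩ heq
        by_contra hne
        have ho : o ∈ S ∧ (cls o).isSome := ⟨hoS, by rw [← hohv, oh.2]; rfl⟩
        have hp : p ∈ S ∧ (cls p).isSome := ⟨hpS, by rw [← hphv, ph.2]; rfl⟩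
        simp only [dif_pos ho, dif_pos hp] at heq
        have hnes : (⟨o, ho⟩ : {o : A // o ∈ S ∧ (cls o).isSome}) ≠ ⟨p, hp⟩ := by
          intro h; exact hne (congrArg Subtype.val h)
        have hdisj := hsv2 ⟨o, ho⟩ ⟨p, hp⟩ hnes heq
        have hadj := hK.1 hohK hphK (by
          intro h; exact hne (hohv ▸ hphv ▸ congrArg Subtype.val h))
        obtain ⟨-, hnon⟩ : oh ≠ ph ∧ (Set.Ico (a oh.1) (b oh.1) ∩ Set.Ico (a ph.1) (b ph.1)).Nonempty := hadj
        rw [hohv, hphv] at hnon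
        rw [hdisj] at hnon
        exact Set.not_nonempty_empty hnon
  · intro hcl
    rcases isEmpty_or_nonempty {o : A // o ∈ S ∧ (cls o).isSome} with hE | hE
    · exact ⟨fun o => isEmptyElim o, fun o => isEmptyElim o, fun o => isEmptyElim o⟩
    set Sw : W → Finset A := fun w => Finset.univ.filter (fun o => o ∈ S ∧ cls o = some w)
      with hSw
    set Cw : W → Finset V := fun w => Finset.univ.filter (fun v => φ v = w) with hCw
    have hCset : ∀ w, {v : V | φ v = w} = ↑(Cw w) := by
      intro w; ext v; simp [hCw]
    have hload : ∀ w : W, ∀ t : ℝ,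
        ((Sw w).filter (fun i => t ∈ Set.Ico (a i) (b i))).card ≤ (Cw w).card := by
      intro w t
      set F := (Sw w).filter (fun i => t ∈ Set.Ico (a i) (b i)) with hF
      have hFmem : ∀ i ∈ F, i ∈ S ∧ cls i = some w ∧ t ∈ Set.Ico (a i) (b i) := by
        intro i hi
        rw [hF, Finset.mem_filter] at hi
        rw [hSw] at hi
        simp only [Finset.mem_filter, Finset.mem_univ, true_and] at hi
        exact ⟨hi.1.1, hi.1.2, hi.2⟩
      set K0 : Set {o : A // cls o = some w} := {oh | oh.1 ∈ F} with hK0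
      have hK0cl : (clsGraph cls a b w).IsClique K0 := by
        intro x hx y hy hxy
        show x ≠ y ∧ (Set.Ico (a x.1) (b x.1) ∩ Set.Ico (a y.1) (b y.1)).Nonempty
        refine ⟨hxy, t, ?_, ?_⟩
        · exact (hFmem x.1 hx).2.2
        · exact (hFmem y.1 hy).2.2
      obtain ⟨K, ⟨hKcl, hK0K⟩, hKmax⟩ :=
        Set.Finite.exists_maximalFor Set.ncard
          {K' : Set {o : A // cls o = some w} | (clsGraph cls a b w).IsClique K' ∧ K0 ⊆ K'}
          (Set.toFinite _) ⟨K0, hK0cl, subset_refl _⟩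
      have hKismax : IsMaxClique (clsGraph cls a b w) K := by
        refine ⟨hKcl, fun K' hK'cl hKK' => ?_⟩
        have h1 : K.ncard ≤ K'.ncard := Set.ncard_le_ncard hKK' (Set.toFinite _)
        have h2 := hKmax (j := K') ⟨hK'cl, hK0K.trans hKK'⟩ h1
        exact (Set.eq_of_subset_of_ncard_le hKK' h2.ge (Set.toFinite _)).symm
      have hbound := hcl w K hKismax
      have hFsub : ↑F ⊆ S ∩ Subtype.val '' K := by
        intro o ho
        obtain ⟨h1, h2, h3⟩ := hFmem o ho
        exact ⟨h1, ⟨o, h2⟩, hK0K (by exact ho), rfl⟩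
      calc F.card = (↑F : Set A).ncard := (Set.ncard_coe_finset F).symm
        _ ≤ (S ∩ Subtype.val '' K).ncard := Set.ncard_le_ncard hFsub (Set.toFinite _)
        _ ≤ {v : V | φ v = w}.ncard := hbound
        _ = (Cw w).card := by rw [hCset w, Set.ncard_coe_finset]
    have hVne : Nonempty V := by
      obtain ⟨o₀⟩ := hE
      set w₀ := (cls o₀.1).get o₀.2.2 with hw₀
      have hcls₀ : cls o₀.1 = some w₀ := (Option.some_get o₀.2.2).symm
      have hmem : o₀.1 ∈ (Sw w₀).filter (fun i => a o₀.1 ∈ Set.Ico (a i) (b i)) := by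
        rw [Finset.mem_filter, hSw]
        simp only [Finset.mem_filter, Finset.mem_univ, true_and]
        exact ⟨⟨o₀.2.1, hcls₀⟩, le_refl _, hab o₀.1⟩
      have h1 : 1 ≤ (Cw w₀).card :=
        le_trans (Finset.card_pos.mpr ⟨o₀.1, hmem⟩) (hload w₀ (a o₀.1))
      obtain ⟨v, -⟩ := Finset.card_pos.mp h1
      exact ⟨v⟩
    have key : ∀ w : W, ∃ f : A → V, (∀ i ∈ Sw w, f i ∈ Cw w) ∧
        ∀ i ∈ Sw w, ∀ j ∈ Sw w, i ≠ j → f i = f j →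
          Set.Ico (a i) (b i) ∩ Set.Ico (a j) (b j) = ∅ := by
      intro w
      rcases (Sw w).eq_empty_or_nonempty with he | hne
      · exact ⟨fun _ => Classical.arbitrary V, by simp [he], by simp [he]⟩
      · exact interval_color a b hab (Cw w) (Sw w) hne (hload w)
    choose f hf1 hf2 using key
    have hmemSw : ∀ (o : {o : A // o ∈ S ∧ (cls o).isSome}),
        o.1 ∈ Sw ((cls o.1).get o.2.2) := by
      intro o
      rw [hSw]
      simp only [Finset.mem_filter, Finset.mem_univ, true_and]
      exact ⟨o.2.1, (Option.some_get o.2.2).symm⟩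
    refine ⟨fun o => f ((cls o.1).get o.2.2) o.1, ?_, ?_⟩
    · intro o w' hcl'
      have hw : (cls o.1).get o.2.2 = w' := by
        simp only [hcl', Option.get_some]
      have := hf1 _ _ (hmemSw o)
      rw [hCw] at this
      simp only [Finset.mem_filter, Finset.mem_univ, true_and] at this
      show φ (f ((cls o.1).get o.2.2) o.1) = w'
      rw [hw] at this ⊢
      exact this
    · intro o p hne heq
      have heq' : f ((cls o.1).get o.2.2) o.1 = f ((cls p.1).get p.2.2) p.1 := heq
      have hwo := hf1 _ _ (hmemSw o)
      have hwp := hf1 _ _ (hmemSw p)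
      rw [hCw] at hwo hwp
      simp only [Finset.mem_filter, Finset.mem_univ, true_and] at hwo hwp
      have hw : (cls o.1).get o.2.2 = (cls p.1).get p.2.2 := by
        rw [← hwo, ← hwp, heq']
      have hvne : o.1 ≠ p.1 := fun h => hne (Subtype.ext h)
      refine hf2 ((cls o.1).get o.2.2) o.1 (hmemSw o) p.1 ?_ hvne ?_
      · rw [hw]; exact hmemSw p
      · rw [heq', hw]
end
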